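/- If p is continuous and 2π-periodic on ℝ (restricted to [0,∞)), then for every r > 0 the play output satisfies 𝔭_r[p](t + 2π) = 𝔭_r[p](t) for all t ≥ 2π; i.e., the play operator response becomes periodic after one period. -/

import Mathlib

open MeasureTheory Set

/-- `IsPlayLoc r p ξ ξ'` : `ξ` (locally `W^{1,1}` on `[0,∞)`, with a.e. derivative `ξ'`)
solves the play variational inequality with input `p` and memory parameter `r` on `[0,∞)`. -/
def IsPlayLoc (r : ℝ) (p ξ ξ' : ℝ → ℝ) : Prop :=
  (∀ T > (0:ℝ), IntervalIntegrable ξ' volume 0 T) ∧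
  (∀ t ∈ Set.Ici (0:ℝ), ξ t = ξ 0 + ∫ s in (0:ℝ)..t, ξ' s) ∧
  (∀ t ∈ Set.Ici (0:ℝ), |p t - ξ t| ≤ r) ∧
  (∀ᵐ t ∂(volume.restrict (Set.Ici (0:ℝ))),
      ∀ z ∈ Set.Icc (-r) r, 0 ≤ ξ' t * (p t - ξ t - z)) ∧
  p 0 - ξ 0 = max (-r) (min (p 0) r)

/-! ### Auxiliary lemmas -/

section Aux

variable {q ξ ξ' : ℝ → ℝ}

lemma my_diff_eq_integral
    (hint : ∀ A > (0:ℝ), IntervalIntegrable ξ' volume 0 A)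
    (hrep : ∀ t ∈ Set.Ici (0:ℝ), ξ t = ξ 0 + ∫ s in (0:ℝ)..t, ξ' s)
    {a b : ℝ} (h0 : 0 ≤ a) (hab : a ≤ b) :
    ξ b - ξ a = ∫ s in a..b, ξ' s := by
  rcases eq_or_lt_of_le hab with rfl | hlt
  · simp
  have hbpos : 0 < b := lt_of_le_of_lt h0 hlt
  have h1 : IntervalIntegrable ξ' volume 0 a := by
    refine (hint b hbpos).mono_set ?_
    rw [uIcc_of_le h0, uIcc_of_le hbpos.le]
    exact Icc_subset_Icc le_rfl hab
  have h2 : IntervalIntegrable ξ' volume a b := by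
    refine (hint b hbpos).mono_set ?_
    rw [uIcc_of_le hab, uIcc_of_le hbpos.le]
    exact Icc_subset_Icc h0 le_rfl
  have hadd := intervalIntegral.integral_add_adjacent_intervals h1 h2
  have hb := hrep b (le_of_lt hbpos)
  have ha := hrep a h0
  rw [hb, ha]
  linarith

lemma my_ind_intable (hint : ∀ A > (0:ℝ), IntervalIntegrable ξ' volume 0 A) (a b : ℝ) :
    IntervalIntegrable ((Set.Ici (0:ℝ)).indicator ξ') volume a b := by
  rw [intervalIntegrable_iff, IntegrableOn, integrable_indicator_iff measurableSet_Ici,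
    IntegrableOn, Measure.restrict_restrict measurableSet_Ici]
  have h1 : IntegrableOn ξ' (Set.Icc 0 (|a| + |b| + 1)) volume := by
    rw [integrableOn_Icc_iff_integrableOn_Ioc]
    have := hint (|a| + |b| + 1) (by positivity)
    rwa [intervalIntegrable_iff, uIoc_of_le (by positivity)] at this
  refine h1.mono_set ?_
  rintro x ⟨hx1, hx2⟩
  rw [Set.mem_uIoc] at hx2
  refine ⟨hx1, ?_⟩
  rcases hx2 with ⟨_, h⟩ | ⟨_, h⟩ <;>
    linarith [le_abs_self a, le_abs_self b, abs_nonneg a, abs_nonneg b]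

/-- On an interval where `ξ (s+T) > ξ s`, the solution `ξ` is nondecreasing. -/
lemma my_inc_step {r T τ a : ℝ} (hr : 0 < r) (hT : 0 < T) (h0a : 0 ≤ a) (haτ : a ≤ τ)
    (hint : ∀ A > (0:ℝ), IntervalIntegrable ξ' volume 0 A)
    (hrep : ∀ t ∈ Set.Ici (0:ℝ), ξ t = ξ 0 + ∫ s in (0:ℝ)..t, ξ' s)
    (hbd : ∀ t ∈ Set.Ici (0:ℝ), |q t - ξ t| ≤ r)
    (hVI : ∀ᵐ t ∂(volume.restrict (Set.Ici (0:ℝ))),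
      ∀ z ∈ Set.Icc (-r) r, 0 ≤ ξ' t * (q t - ξ t - z))
    (hq : ∀ t ∈ Set.Ici (0:ℝ), q (t + T) = q t)
    (hpos : ∀ s ∈ Set.Ioc a τ, ξ s < ξ (s + T)) :
    ξ a ≤ ξ τ := by
  have key : ξ τ - ξ a = ∫ s in a..τ, ξ' s := my_diff_eq_integral hint hrep h0a haτ
  have hsub : Set.Ioc a τ ⊆ Set.Ici (0:ℝ) := fun s hs => le_trans h0a hs.1.le
  have hae : ∀ᵐ s ∂(volume.restrict (Set.Ioc a τ)), 0 ≤ ξ' s := by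
    filter_upwards [ae_restrict_of_ae_restrict_of_subset hsub hVI,
      ae_restrict_mem measurableSet_Ioc] with s hs hmem
    have hs0 : (0:ℝ) ≤ s := le_trans h0a hmem.1.le
    have h1 := hbd (s + T) (by simp only [Set.mem_Ici]; linarith)
    have h2 := hq s hs0
    have h3 := hpos s hmem
    have habs := abs_le.mp h1
    have h4 : 0 ≤ ξ' s * (q s - ξ s + r) := by
      have := hs (-r) ⟨le_refl _, by linarith⟩
      simpa [sub_neg_eq_add] using this
    have hfac : 0 < q s - ξ s + r := by
      rw [← h2]; linarith [habs.1, h3]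
    by_contra hneg
    push_neg at hneg
    nlinarith
  rw [intervalIntegral.integral_of_le haτ] at key
  have := setIntegral_nonneg_of_ae_restrict hae
  linarith

/-- On a shifted interval where `ξ (s+T) > ξ s`, the shifted solution is nonincreasing. -/
lemma my_dec_step {r T τ c : ℝ} (hr : 0 < r) (hT : 0 < T) (h0c : 0 ≤ c) (hcτ : c ≤ τ)
    (hint : ∀ A > (0:ℝ), IntervalIntegrable ξ' volume 0 A)
    (hrep : ∀ t ∈ Set.Ici (0:ℝ), ξ t = ξ 0 + ∫ s in (0:ℝ)..t, ξ' s)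
    (hbd : ∀ t ∈ Set.Ici (0:ℝ), |q t - ξ t| ≤ r)
    (hVI : ∀ᵐ t ∂(volume.restrict (Set.Ici (0:ℝ))),
      ∀ z ∈ Set.Icc (-r) r, 0 ≤ ξ' t * (q t - ξ t - z))
    (hq : ∀ t ∈ Set.Ici (0:ℝ), q (t + T) = q t)
    (hpos : ∀ s ∈ Set.Ioc c τ, ξ s < ξ (s + T)) :
    ξ (τ + T) ≤ ξ (c + T) := by
  have key : ξ (τ + T) - ξ (c + T) = ∫ s in (c+T)..(τ+T), ξ' s :=
    my_diff_eq_integral hint hrep (by linarith) (by linarith)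
  have hsub : Set.Ioc (c+T) (τ+T) ⊆ Set.Ici (0:ℝ) := fun s hs => by
    have := hs.1; simp only [Set.mem_Ici]; linarith
  have hae : ∀ᵐ s ∂(volume.restrict (Set.Ioc (c+T) (τ+T))), ξ' s ≤ 0 := by
    filter_upwards [ae_restrict_of_ae_restrict_of_subset hsub hVI,
      ae_restrict_mem measurableSet_Ioc] with s hs hmem
    have hst0 : (0:ℝ) ≤ s - T := by have := hmem.1; linarith
    have h1 := hbd (s - T) hst0
    have h2 := hq (s - T) hst0
    rw [sub_add_cancel] at h2
    have h3 := hpos (s - T) ⟨by linarith [hmem.1], by linarith [hmem.2]⟩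
    rw [sub_add_cancel] at h3
    have habs := abs_le.mp h1
    have h4 : 0 ≤ ξ' s * (q s - ξ s - r) := hs r ⟨by linarith, le_refl _⟩
    have hfac : q s - ξ s - r < 0 := by
      rw [h2]; linarith [habs.2, h3]
    by_contra hneg
    push_neg at hneg
    nlinarith
  rw [intervalIntegral.integral_of_le (by linarith : c + T ≤ τ + T)] at key
  have := setIntegral_nonpos_of_ae_restrict hae
  linarith

/-- Core lemma : the solution of the play variational inequality with `T`-periodic input
cannot strictly increase over a period at any time `τ ≥ T`. -/
lemma my_core {r T τ : ℝ} (hr : 0 < r) (hT : 0 < T) (hτ : T ≤ τ)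
    (hint : ∀ A > (0:ℝ), IntervalIntegrable ξ' volume 0 A)
    (hrep : ∀ t ∈ Set.Ici (0:ℝ), ξ t = ξ 0 + ∫ s in (0:ℝ)..t, ξ' s)
    (hbd : ∀ t ∈ Set.Ici (0:ℝ), |q t - ξ t| ≤ r)
    (hVI : ∀ᵐ t ∂(volume.restrict (Set.Ici (0:ℝ))),
      ∀ z ∈ Set.Icc (-r) r, 0 ≤ ξ' t * (q t - ξ t - z))
    (hq : ∀ t ∈ Set.Ici (0:ℝ), q (t + T) = q t) :
    ¬ ξ τ < ξ (τ + T) := by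
  intro hlt
  have hτ0 : (0:ℝ) ≤ τ := le_trans hT.le hτ
  -- a globally continuous version of ξ
  set g : ℝ → ℝ := fun t => ξ 0 + ∫ s in (0:ℝ)..t, (Set.Ici (0:ℝ)).indicator ξ' s with hg_def
  have hgcont : Continuous g := by
    apply continuous_const.add
    exact intervalIntegral.continuous_primitive (fun a b => my_ind_intable hint a b) 0
  have hgξ : ∀ t, 0 ≤ t → g t = ξ t := by
    intro t ht
    rw [hrep t ht, hg_def]
    simp only
    congr 1
    apply intervalIntegral.integral_congr
    intro s hs
    rw [uIcc_of_le ht] at hs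
    exact Set.indicator_of_mem (hs.1 : (0:ℝ) ≤ s) ξ'
  set Z : Set ℝ := Set.Icc 0 τ ∩ {t | g (t + T) ≤ g t} with hZ_def
  have hZclosed : IsClosed Z :=
    IsClosed.inter isClosed_Icc
      (isClosed_le (hgcont.comp (continuous_id.add continuous_const)) hgcont)
  by_cases hZne : Z.Nonempty
  · have hZcomp : IsCompact Z :=
      isCompact_Icc.of_isClosed_subset hZclosed Set.inter_subset_left
    set u := sSup Z with hu_def
    have huZ : u ∈ Z := hZcomp.sSup_mem hZne
    have hu0 : (0:ℝ) ≤ u := huZ.1.1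
    have huτ : u ≤ τ := huZ.1.2
    have hupos : ∀ s ∈ Set.Ioc u τ, ξ s < ξ (s + T) := by
      intro s hs
      by_contra hc
      push_neg at hc
      have hs0 : (0:ℝ) ≤ s := le_trans hu0 hs.1.le
      have hsZ : s ∈ Z := by
        refine ⟨⟨hs0, hs.2⟩, ?_⟩
        simp only [Set.mem_setOf_eq]
        rw [hgξ (s + T) (by linarith), hgξ s hs0]
        exact hc
      have : s ≤ u := le_csSup hZcomp.bddAbove hsZ
      exact absurd hs.1 (not_lt.mpr this)
    have h1 : ξ u ≤ ξ τ := my_inc_step hr hT hu0 huτ hint hrep hbd hVI hq hupos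
    have h2 : ξ (τ + T) ≤ ξ (u + T) := my_dec_step hr hT hu0 huτ hint hrep hbd hVI hq hupos
    have hu : ξ (u + T) ≤ ξ u := by
      have := huZ.2
      simp only [Set.mem_setOf_eq] at this
      rwa [hgξ (u + T) (by linarith), hgξ u hu0] at this
    linarith
  · have hposAll : ∀ s ∈ Set.Icc (0:ℝ) τ, ξ s < ξ (s + T) := by
      intro s hs
      by_contra hc
      push_neg at hc
      apply hZne
      refine ⟨s, hs, ?_⟩
      simp only [Set.mem_setOf_eq]
      rw [hgξ (s + T) (by linarith [hs.1]), hgξ s hs.1]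
      exact hc
    have h1 : ξ T ≤ ξ τ :=
      my_inc_step hr hT hT.le hτ hint hrep hbd hVI hq
        (fun s hs => hposAll s ⟨le_trans hT.le hs.1.le, hs.2⟩)
    have h2 : ξ (τ + T) ≤ ξ (0 + T) :=
      my_dec_step hr hT le_rfl hτ0 hint hrep hbd hVI hq
        (fun s hs => hposAll s ⟨hs.1.le, hs.2⟩)
    rw [zero_add] at h2
    linarith

end Aux

/-- If `p` is continuous and `2π`-periodic on `[0,∞)`, then for every `r > 0` the play
output (the Lipschitz extension of the play operator to continuous inputs) satisfies
`𝔭_r[p](t + 2π) = 𝔭_r[p](t)` for all `t ≥ 2π`. -/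
theorem play_periodic (r : ℝ) (hr : 0 < r)
    (Play : ℝ → (ℝ → ℝ) → (ℝ → ℝ))
    -- `Play` agrees with the solution of the variational inequality on `W^{1,1}` inputs:
    (hPlaySol : ∀ q q' : ℝ → ℝ, (∀ T > (0:ℝ), IntervalIntegrable q' volume 0 T) →
        (∀ t ∈ Set.Ici (0:ℝ), q t = q 0 + ∫ s in (0:ℝ)..t, q' s) →
        ∃ ξ' : ℝ → ℝ, IsPlayLoc r q (Play r q) ξ')
    -- `Play` is the Lipschitz (sup-norm) extension to continuous inputs:
    (hPlayLip : ∀ q₁ q₂ : ℝ → ℝ, Continuous q₁ → Continuous q₂ →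
        ∀ t ∈ Set.Ici (0:ℝ),
          |Play r q₁ t - Play r q₂ t| ≤ sSup ((fun τ => |q₁ τ - q₂ τ|) '' Set.Icc 0 t))
    (p : ℝ → ℝ) (hpc : Continuous p)
    (hper : ∀ t ∈ Set.Ici (0:ℝ), p (t + 2 * Real.pi) = p t) :
    ∀ t ∈ Set.Ici (2 * Real.pi), Play r p (t + 2 * Real.pi) = Play r p t := by
  intro t₀ ht₀
  rw [Set.mem_Ici] at ht₀
  have hπ : (0:ℝ) < 2 * Real.pi := by positivity
  haveI : Fact (0 < 2 * Real.pi) := ⟨hπ⟩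
  have ht₀0 : (0:ℝ) ≤ t₀ := le_trans hπ.le ht₀
  -- the continuous periodic extension via AddCircle
  have hp20 : p 0 = p (0 + 2 * Real.pi) := by
    exact (hper 0 (Set.mem_Ici.mpr le_rfl)).symm
  set f : C(AddCircle (2 * Real.pi), ℝ) :=
    ⟨AddCircle.liftIco (2 * Real.pi) 0 p,
      AddCircle.liftIco_continuous hp20 (by rw [zero_add]; exact hpc.continuousOn)⟩ with hf_def
  have hlift : ∀ t : ℝ, 0 ≤ t → f ↑t = p t := by
    have main : ∀ n : ℕ, ∀ t : ℝ, 0 ≤ t → t < 2 * Real.pi * (n + 1) →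
        AddCircle.liftIco (2 * Real.pi) 0 p ↑t = p t := by
      intro n
      induction n with
      | zero =>
        intro t h0 h1
        exact AddCircle.liftIco_zero_coe_apply ⟨h0, by simpa using h1⟩
      | succ n ih =>
        intro t h0 h1
        by_cases hc : t < 2 * Real.pi
        · exact AddCircle.liftIco_zero_coe_apply ⟨h0, hc⟩
        · push_neg at hc
          have hcoe : ((t : ℝ) : AddCircle (2 * Real.pi)) = ((t - 2 * Real.pi : ℝ) :
              AddCircle (2 * Real.pi)) := by
            rw [← AddCircle.coe_add_period (2 * Real.pi) (t - 2 * Real.pi), sub_add_cancel]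
          rw [hcoe, ih (t - 2 * Real.pi) (by linarith) (by push_cast; push_cast at h1; linarith)]
          have := hper (t - 2 * Real.pi) (by simp only [Set.mem_Ici]; linarith)
          rw [sub_add_cancel] at this
          exact this.symm
    intro t ht
    obtain ⟨n, hn⟩ := exists_nat_gt (t / (2 * Real.pi))
    have ht2 : t < 2 * Real.pi * (n + 1) := by
      rw [div_lt_iff₀ hπ] at hn
      nlinarith [hn, hπ]
    exact main n t ht ht2
  -- approximation of p by smooth periodic functions (real parts of trigonometric polynomials)
  have happrox : ∀ ε > (0:ℝ), ∃ q q' : ℝ → ℝ, Continuous q ∧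
      (∀ t : ℝ, q (t + 2 * Real.pi) = q t) ∧
      (∀ A > (0:ℝ), IntervalIntegrable q' volume 0 A) ∧
      (∀ t ∈ Set.Ici (0:ℝ), q t = q 0 + ∫ s in (0:ℝ)..t, q' s) ∧
      (∀ s : ℝ, 0 ≤ s → |q s - p s| ≤ ε) := by
    intro ε hε
    set F : C(AddCircle (2 * Real.pi), ℂ) :=
      ContinuousMap.comp ⟨Complex.ofReal, Complex.continuous_ofReal⟩ f with hF_def
    have hFmem : F ∈ closure ((Submodule.span ℂ
        (Set.range (@fourier (2 * Real.pi)))) : Set C(AddCircle (2 * Real.pi), ℂ)) := by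
      rw [← Submodule.topologicalClosure_coe, span_fourier_closure_eq_top]
      trivial
    obtain ⟨G, hGspan, hGF⟩ := Metric.mem_closure_iff.mp hFmem ε hε
    have hdiff : ∀ H ∈ Submodule.span ℂ (Set.range (@fourier (2 * Real.pi))),
        ∃ d' : ℝ → ℂ, Continuous d' ∧
          ∀ x : ℝ, HasDerivAt (fun y : ℝ => H (y : AddCircle (2 * Real.pi))) (d' x) x := by
      intro H hH
      induction hH using Submodule.span_induction with
      | mem x hx =>
        obtain ⟨n, rfl⟩ := hx
        refine ⟨fun x => 2 * (Real.pi : ℂ) * Complex.I * (n : ℂ) / ((2 * Real.pi : ℝ) : ℂ) *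
          fourier n (x : AddCircle (2 * Real.pi)), ?_, fun x => hasDerivAt_fourier (2 * Real.pi) n x⟩
        exact continuous_const.mul ((map_continuous (fourier n)).comp
          (AddCircle.continuous_mk' (2 * Real.pi)))
      | zero =>
        exact ⟨0, continuous_const, fun x => by
          simpa using (hasDerivAt_const x (0:ℂ))⟩
      | add x y hx hy ihx ihy =>
        obtain ⟨d1, hd1c, hd1⟩ := ihx
        obtain ⟨d2, hd2c, hd2⟩ := ihy
        exact ⟨d1 + d2, hd1c.add hd2c, fun s => by
          simpa [ContinuousMap.add_apply, Pi.add_def] using (hd1 s).add (hd2 s)⟩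
      | smul c x hx ihx =>
        obtain ⟨d, hdc, hd⟩ := ihx
        exact ⟨fun s => c * d s, continuous_const.mul hdc, fun s => by
          simpa [ContinuousMap.smul_apply, smul_eq_mul] using (hd s).const_mul c⟩
    obtain ⟨d', hd'c, hd'⟩ := hdiff G hGspan
    set q : ℝ → ℝ := fun x => (G (x : AddCircle (2 * Real.pi))).re with hq_def
    set q' : ℝ → ℝ := fun x => (d' x).re with hq'_def
    have hqc : Continuous q :=
      Complex.continuous_re.comp ((map_continuous G).comp (AddCircle.continuous_mk' _))
    have hq'c : Continuous q' := Complex.continuous_re.comp hd'c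
    have hqderiv : ∀ x : ℝ, HasDerivAt q (q' x) x := fun x =>
      (Complex.reCLM.hasFDerivAt.comp_hasDerivAt x (hd' x))
    refine ⟨q, q', hqc, ?_, fun A _ => hq'c.intervalIntegrable 0 A, ?_, ?_⟩
    · intro t
      simp only [hq_def]
      rw [AddCircle.coe_add_period]
    · intro t _
      have hFTC := intervalIntegral.integral_eq_sub_of_hasDerivAt
        (f := q) (f' := q') (a := 0) (b := t)
        (fun s _ => hqderiv s) (hq'c.intervalIntegrable 0 t)
      linarith [hFTC]
    · intro s hs
      have hps : p s = (F (s : AddCircle (2 * Real.pi))).re := by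
        rw [hF_def]
        simp only [ContinuousMap.comp_apply, ContinuousMap.coe_mk, Complex.ofReal_re]
        exact (hlift s hs).symm
      rw [hps]
      have h1 : |(G (s : AddCircle (2 * Real.pi))).re - (F (s : AddCircle (2 * Real.pi))).re|
          ≤ ‖G (s : AddCircle (2 * Real.pi)) - F (s : AddCircle (2 * Real.pi))‖ := by
        rw [← Complex.sub_re]
        exact Complex.abs_re_le_norm _
      have h2 : ‖G (s : AddCircle (2 * Real.pi)) - F (s : AddCircle (2 * Real.pi))‖
          ≤ dist G F := by
        rw [← dist_eq_norm]
        exact ContinuousMap.dist_apply_le_dist _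
      rw [dist_comm] at h2
      exact le_trans h1 (le_trans h2 hGF.le)
  -- main estimate
  have key : ∀ ε > (0:ℝ), |Play r p (t₀ + 2 * Real.pi) - Play r p t₀| ≤ 2 * ε := by
    intro ε hε
    obtain ⟨q, q', hqc, hqper, hq'int, hqrep, hqclose⟩ := happrox ε hε
    obtain ⟨ξ', hPL⟩ := hPlaySol q q' hq'int hqrep
    obtain ⟨hint', hrep', hbd', hVI', _⟩ := hPL
    have hqper' : ∀ t ∈ Set.Ici (0:ℝ), q (t + 2 * Real.pi) = q t := fun t _ => hqper t
    have e1 : ¬ Play r q t₀ < Play r q (t₀ + 2 * Real.pi) :=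
      my_core hr hπ ht₀ hint' hrep' hbd' hVI' hqper'
    have e2 : ¬ Play r q (t₀ + 2 * Real.pi) < Play r q t₀ := by
      have := my_core (q := fun t => -q t) (ξ := fun t => -(Play r q t))
        (ξ' := fun t => -(ξ' t)) (τ := t₀) hr hπ ht₀
        (fun A hA => (hint' A hA).neg)
        (fun t ht => by
          simp only [intervalIntegral.integral_neg]
          linarith [hrep' t ht])
        (fun t ht => by
          rw [show -q t - -Play r q t = -(q t - Play r q t) by ring, abs_neg]
          exact hbd' t ht)
        (by
          filter_upwards [hVI'] with t ht z hz
          have := ht (-z) ⟨by linarith [hz.2], by linarith [hz.1]⟩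
          nlinarith [this])
        (fun t _ => by simp [hqper t])
      simpa using this
    have heq : Play r q (t₀ + 2 * Real.pi) = Play r q t₀ :=
      le_antisymm (not_lt.mp e1) (not_lt.mp e2)
    have hsup : ∀ s : ℝ, 0 ≤ s →
        sSup ((fun τ => |p τ - q τ|) '' Set.Icc 0 s) ≤ ε := by
      intro s _
      apply Real.sSup_le
      · rintro x ⟨τ, hτ, rfl⟩
        show |p τ - q τ| ≤ ε
        rw [abs_sub_comm]
        exact hqclose τ hτ.1
      · exact hε.le
    have A1 : |Play r p (t₀ + 2 * Real.pi) - Play r q (t₀ + 2 * Real.pi)| ≤ ε :=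
      le_trans (hPlayLip p q hpc hqc (t₀ + 2 * Real.pi)
        (by simp only [Set.mem_Ici]; linarith)) (hsup _ (by linarith))
    have A2 : |Play r p t₀ - Play r q t₀| ≤ ε :=
      le_trans (hPlayLip p q hpc hqc t₀ (by simp only [Set.mem_Ici]; linarith)) (hsup _ ht₀0)
    calc |Play r p (t₀ + 2 * Real.pi) - Play r p t₀|
        ≤ |Play r p (t₀ + 2 * Real.pi) - Play r q (t₀ + 2 * Real.pi)| +
          |Play r q (t₀ + 2 * Real.pi) - Play r p t₀| := abs_sub_le _ _ _
      _ = |Play r p (t₀ + 2 * Real.pi) - Play r q (t₀ + 2 * Real.pi)| +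
          |Play r q t₀ - Play r p t₀| := by rw [heq]
      _ ≤ ε + ε := add_le_add A1 (by rw [abs_sub_comm]; exact A2)
      _ = 2 * ε := by ring
  by_contra hne
  have hpos : 0 < |Play r p (t₀ + 2 * Real.pi) - Play r p t₀| :=
    abs_pos.mpr (sub_ne_zero.mpr hne)
  have := key (|Play r p (t₀ + 2 * Real.pi) - Play r p t₀| / 4) (by positivity)
  linarith
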